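/- Let $V$ be a 4-dimensional real vector space with dual basis $\alpha, \alpha^1, \alpha^2, \alpha^3$ of $V^*$. Suppose $\omega_i = \alpha\wedge\alpha^i + \sum_{(pqr)=(123)}\sigma_{ip}\alpha^q\wedge\alpha^r$ with $\sigma$ symmetric positive-definite, and $\omega_i^B = \theta\wedge\alpha^i + \sum_{(pqr)=(123)}B_{ip}\alpha^q\wedge\alpha^r$ where $\theta \in V^*$ satisfies $\theta \wedge \alpha^1\wedge\alpha^2\wedge\alpha^3 = \alpha\wedge\alpha^1\wedge\alpha^2\wedge\alpha^3$, and $B$ is a matrix with positive-definite symmetric part $\widehat{B}$. Then for every $s \in [0,1]$ and every nonzero $a \in \mathbb{R}^3$, the 2-form $a^i\big((1-s)\omega_i + s\,\omega_i^B\big)$ is nondegenerate, i.e. its wedge square is a nonzero multiple of $\alpha\wedge\alpha^1\wedge\alpha^2\wedge\alpha^3$. -/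

import Mathlib

open ExteriorAlgebra Module Matrix

/-- Abstract wedge-square computation with four anticommuting square-zero generators. -/
lemma wedge_sq_aux {A : Type*} [Ring A] [Algebra ℝ A] (u y1 y2 y3 : A)
    (hu : u * u = 0) (h1 : y1 * y1 = 0) (h2 : y2 * y2 = 0) (h3 : y3 * y3 = 0)
    (s1 : y1 * u = -(u * y1)) (s2 : y2 * u = -(u * y2)) (s3 : y3 * u = -(u * y3))
    (s12 : y2 * y1 = -(y1 * y2)) (s13 : y3 * y1 = -(y1 * y3)) (s23 : y3 * y2 = -(y2 * y3))
    (a1 a2 a3 c1 c2 c3 : ℝ) :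
    (u * (a1 • y1 + a2 • y2 + a3 • y3) + c1 • (y2 * y3) + c2 • (y3 * y1) + c3 • (y1 * y2)) *
    (u * (a1 • y1 + a2 • y2 + a3 • y3) + c1 • (y2 * y3) + c2 • (y3 * y1) + c3 • (y1 * y2))
      = (2 * (a1 * c1 + a2 * c2 + a3 * c3)) • (u * (y1 * (y2 * y3))) := by
  have hu' : ∀ z : A, u * (u * z) = 0 := fun z => by rw [← mul_assoc, hu, zero_mul]
  have h1' : ∀ z : A, y1 * (y1 * z) = 0 := fun z => by rw [← mul_assoc, h1, zero_mul]
  have h2' : ∀ z : A, y2 * (y2 * z) = 0 := fun z => by rw [← mul_assoc, h2, zero_mul]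
  have h3' : ∀ z : A, y3 * (y3 * z) = 0 := fun z => by rw [← mul_assoc, h3, zero_mul]
  have s1' : ∀ z : A, y1 * (u * z) = -(u * (y1 * z)) := fun z => by
    rw [← mul_assoc, s1, neg_mul, mul_assoc]
  have s2' : ∀ z : A, y2 * (u * z) = -(u * (y2 * z)) := fun z => by
    rw [← mul_assoc, s2, neg_mul, mul_assoc]
  have s3' : ∀ z : A, y3 * (u * z) = -(u * (y3 * z)) := fun z => by
    rw [← mul_assoc, s3, neg_mul, mul_assoc]
  have s12' : ∀ z : A, y2 * (y1 * z) = -(y1 * (y2 * z)) := fun z => by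
    rw [← mul_assoc, s12, neg_mul, mul_assoc]
  have s13' : ∀ z : A, y3 * (y1 * z) = -(y1 * (y3 * z)) := fun z => by
    rw [← mul_assoc, s13, neg_mul, mul_assoc]
  have s23' : ∀ z : A, y3 * (y2 * z) = -(y2 * (y3 * z)) := fun z => by
    rw [← mul_assoc, s23, neg_mul, mul_assoc]
  simp only [mul_add, add_mul, smul_mul_assoc, mul_smul_comm, mul_assoc, mul_neg, neg_mul,
    smul_neg, neg_neg, smul_smul, hu, h1, h2, h3, hu', h1', h2', h3',
    s1, s2, s3, s12, s13, s23, s1', s2', s3', s12', s13', s23',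
    smul_zero, mul_zero, zero_mul, add_zero, zero_add, neg_zero]
  match_scalars <;> ring

/-- The 2-form `β ∧ αⁱ + M_{i1} α²∧α³ + M_{i2} α³∧α¹ + M_{i3} α¹∧α²`
(indices shifted to `0,1,2`), as an element of the exterior algebra of `V*`. -/
noncomputable def omegaOf {V : Type*} [AddCommGroup V] [Module ℝ V]
    (β α1 α2 α3 : Module.Dual ℝ V) (M : Matrix (Fin 3) (Fin 3) ℝ) (i : Fin 3) :
    ExteriorAlgebra ℝ (Module.Dual ℝ V) :=
  ι ℝ β * ι ℝ (![α1, α2, α3] i)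
    + M i 0 • (ι ℝ α2 * ι ℝ α3) + M i 1 • (ι ℝ α3 * ι ℝ α1) + M i 2 • (ι ℝ α1 * ι ℝ α2)

set_option maxHeartbeats 1600000 in
/-- pointwise nondegeneracy along the linear interpolation. With
`ω_i = α∧αⁱ + Σ σ_{ip} α^q∧α^r` (`σ` symmetric positive-definite),
`ω_i^B = θ∧αⁱ + Σ B_{ip} α^q∧α^r` where `θ∧α¹∧α²∧α³ = α∧α¹∧α²∧α³` and the symmetric
part of `B` is positive-definite, for every `s ∈ [0,1]` and nonzero `a ∈ ℝ³` the 2-form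
`aⁱ((1-s)ω_i + s ω_i^B)` has wedge square a nonzero multiple of `α∧α¹∧α²∧α³`. -/
theorem linear_interpolation_nondegenerate {V : Type*} [AddCommGroup V] [Module ℝ V]
    [FiniteDimensional ℝ V] (hdim : finrank ℝ V = 4)
    (α α1 α2 α3 θ : Module.Dual ℝ V)
    (b : Basis (Fin 4) ℝ (Module.Dual ℝ V))
    (hb : b 0 = α ∧ b 1 = α1 ∧ b 2 = α2 ∧ b 3 = α3)
    (σ B : Matrix (Fin 3) (Fin 3) ℝ)
    (hσs : σ.IsSymm) (hσ : σ.PosDef)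
    (hB : (((1:ℝ)/2) • (B + B.transpose)).PosDef)
    (hθ : ι ℝ θ * (ι ℝ α1 * ι ℝ α2 * ι ℝ α3) = ι ℝ α * (ι ℝ α1 * ι ℝ α2 * ι ℝ α3))
    (s : ℝ) (hs : s ∈ Set.Icc (0:ℝ) 1) (a : Fin 3 → ℝ) (ha : a ≠ 0) :
    ∃ c : ℝ, c ≠ 0 ∧
      (∑ i, a i • ((1 - s) • omegaOf α α1 α2 α3 σ i + s • omegaOf θ α1 α2 α3 B i)) *
      (∑ i, a i • ((1 - s) • omegaOf α α1 α2 α3 σ i + s • omegaOf θ α1 α2 α3 B i))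
        = c • (ι ℝ α * ι ℝ α1 * ι ℝ α2 * ι ℝ α3) := by
  obtain ⟨hs0, hs1⟩ := hs
  -- the interpolated matrix coefficients
  set c0 : ℝ := a 0 * ((1-s)*σ 0 0 + s*B 0 0) + a 1 * ((1-s)*σ 1 0 + s*B 1 0)
      + a 2 * ((1-s)*σ 2 0 + s*B 2 0) with hc0
  set c1 : ℝ := a 0 * ((1-s)*σ 0 1 + s*B 0 1) + a 1 * ((1-s)*σ 1 1 + s*B 1 1)
      + a 2 * ((1-s)*σ 2 1 + s*B 2 1) with hc1
  set c2 : ℝ := a 0 * ((1-s)*σ 0 2 + s*B 0 2) + a 1 * ((1-s)*σ 1 2 + s*B 1 2)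
      + a 2 * ((1-s)*σ 2 2 + s*B 2 2) with hc2
  refine ⟨2 * (a 0 * c0 + a 1 * c1 + a 2 * c2), ?_, ?_⟩
  · -- nonvanishing, from positive definiteness
    have hσpos := hσ.dotProduct_mulVec_pos ha
    have hBpos := hB.dotProduct_mulVec_pos ha
    have hid : a 0 * c0 + a 1 * c1 + a 2 * c2
        = (1 - s) * (star a ⬝ᵥ (σ *ᵥ a))
          + s * (star a ⬝ᵥ ((((1:ℝ)/2) • (B + B.transpose)) *ᵥ a)) := by
      rw [hc0, hc1, hc2]
      simp only [dotProduct, Matrix.mulVec, Fin.sum_univ_three, Matrix.smul_apply,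
        Matrix.add_apply, Matrix.transpose_apply, Pi.star_apply, star_trivial, smul_eq_mul]
      ring
    have key : 0 < a 0 * c0 + a 1 * c1 + a 2 * c2 := by
      rw [hid]
      rcases eq_or_lt_of_le hs1 with h | h
      · subst h
        simpa using hBpos
      · have h1 : 0 < (1 - s) * (star a ⬝ᵥ (σ *ᵥ a)) :=
          mul_pos (by linarith) hσpos
        have h2 : 0 ≤ s * (star a ⬝ᵥ ((((1:ℝ)/2) • (B + B.transpose)) *ᵥ a)) :=
          mul_nonneg hs0 hBpos.le
        linarith
    positivity
  · -- the wedge-square computation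
    set u : ExteriorAlgebra ℝ (Module.Dual ℝ V) := ι ℝ ((1-s) • α + s • θ) with hudef
    have hu : u = (1-s) • ι ℝ α + s • ι ℝ θ := by simp [hudef, map_add, _root_.map_smul]
    have hsum : (∑ i, a i • ((1 - s) • omegaOf α α1 α2 α3 σ i + s • omegaOf θ α1 α2 α3 B i))
        = u * (a 0 • ι ℝ α1 + a 1 • ι ℝ α2 + a 2 • ι ℝ α3)
          + c0 • (ι ℝ α2 * ι ℝ α3) + c1 • (ι ℝ α3 * ι ℝ α1) + c2 • (ι ℝ α1 * ι ℝ α2) := by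
      rw [hu, hc0, hc1, hc2]
      simp only [omegaOf, Fin.sum_univ_three, Matrix.cons_val_zero, Matrix.cons_val_one,
        Matrix.head_cons, Matrix.cons_val_two, Matrix.tail_cons, smul_add, mul_add, add_mul,
        smul_mul_assoc, mul_smul_comm, smul_smul]
      module
    rw [hsum]
    have swap : ∀ x y : Module.Dual ℝ V, ι ℝ y * ι ℝ x = -(ι ℝ x * ι ℝ y) := fun x y =>
      eq_neg_of_add_eq_zero_left (ι_add_mul_swap y x)
    rw [wedge_sq_aux u (ι ℝ α1) (ι ℝ α2) (ι ℝ α3)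
      (by rw [hudef]; exact ι_sq_zero _) (ι_sq_zero _) (ι_sq_zero _) (ι_sq_zero _)
      (by rw [hudef]; exact swap _ _) (by rw [hudef]; exact swap _ _)
      (by rw [hudef]; exact swap _ _) (swap _ _) (swap _ _) (swap _ _)]
    have huprod : u * (ι ℝ α1 * (ι ℝ α2 * ι ℝ α3)) = ι ℝ α * ι ℝ α1 * ι ℝ α2 * ι ℝ α3 := by
      rw [hu, add_mul, smul_mul_assoc, smul_mul_assoc, ← mul_assoc (ι ℝ α1), hθ,
        ← add_smul, sub_add_cancel, one_smul]
      simp [mul_assoc]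
    rw [huprod]
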